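/- Let p be a prime, α a positive integer, and k = p^α. Let A be a nonempty finite set of integers, with decomposition A = ⋃_{i=1}^{j} A_i into its residue classes A_i = k·X_i + u_i modulo k, indexed so that u₁ = 0 and |A₁| ≥ |A₂| ≥ … ≥ |A_j|. Assume some u_i is not divisible by p, and let m = min{1 ≤ i ≤ j : p ∤ u_i}. Let X̂_m denote the image of X_m in ℤ/kℤ. If |X̂_m| + m − 1 ≤ k, then |Δ_{mm}| ≥ |A₁| + |A₂| + … + |A_{m−1}|, where Δ_{mm} = (A_m + k·A) \ (A_m + k·A_m). -/

import Mathlib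

open Finset Pointwise

/-- The residue class of `A` modulo `k` at residue `u`. -/
def resClass (k : ℕ) (A : Finset ℤ) (u : ℤ) : Finset ℤ :=
  A.filter (fun a => a % (k : ℤ) = u)

/-- The dilate `k·S = {k·s : s ∈ S}`. -/
def kdil (k : ℕ) (S : Finset ℤ) : Finset ℤ :=
  S.image (fun s => (k : ℤ) * s)

/-- `X_u = {(a − u)/k : a ∈ A, a ≡ u (mod k)}`. -/
def Xset (k : ℕ) (A : Finset ℤ) (u : ℤ) : Finset ℤ :=
  (resClass k A u).image (fun a => (a - u) / (k : ℤ))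

/-- `X̂_u`: the image of `X_u` in `ℤ/kℤ`. -/
def Xhat (k : ℕ) (A : Finset ℤ) (u : ℤ) : Finset (ZMod k) :=
  (Xset k A u).image (Int.cast : ℤ → ZMod k)

/-- If `A` is closed under adding a unit `b`, then `A` is everything. -/
lemma closed_unit (n : ℕ) [NeZero n] (A : Finset (ZMod n)) (hA : A.Nonempty)
    (b : ZMod n) (hb : IsUnit b) (h : ∀ a ∈ A, a + b ∈ A) (x : ZMod n) : x ∈ A := by
  obtain ⟨a, ha⟩ := hA
  have key : ∀ m : ℕ, a + (m : ZMod n) * b ∈ A := by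
    intro m
    induction m with
    | zero => simpa using ha
    | succ m ih =>
      push_cast
      have := h _ ih
      convert this using 1
      ring
  obtain ⟨u, hu⟩ := hb
  have := key ((x - a) * ↑u⁻¹).val
  rw [ZMod.natCast_val, ZMod.cast_id] at this
  have hxa : (x - a) * ↑u⁻¹ * b = x - a := by
    rw [← hu, mul_assoc]
    simp
  rw [hxa] at this
  simpa using this

/-- Chowla's theorem: if `0 ∈ B` and every nonzero element of `B` is a unit,
then `|A + B| ≥ min n (|A| + |B| - 1)`. -/
lemma chowla (n : ℕ) [NeZero n] : ∀ (N : ℕ) (A B : Finset (ZMod n)), B.card ≤ N →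
    A.Nonempty → (0 : ZMod n) ∈ B → (∀ b ∈ B, b ≠ 0 → IsUnit b) →
    min n (A.card + B.card - 1) ≤ (A + B).card := by
  intro N
  induction N with
  | zero => intro A B hc h0; simp [Finset.card_eq_zero] at hc; simp [hc] at *
  | succ N ih =>
    intro A B hBN hA hB0 hBu
    by_cases hall : ∀ a ∈ A, ∀ b ∈ B, a + b ∈ A
    · by_cases hB : ∃ b ∈ B, b ≠ 0
      · obtain ⟨b, hbB, hb0⟩ := hB
        have hAuniv : ∀ x, x ∈ A := closed_unit n A hA b (hBu b hbB hb0)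
          (fun a ha => hall a ha b hbB)
        have h1 : A ⊆ A + B := fun a ha => by
          have := Finset.add_mem_add ha hB0
          simpa using this
        have : (n : ℕ) ≤ A.card := by
          have : A = Finset.univ := Finset.eq_univ_iff_forall.mpr hAuniv
          simp [this, ZMod.card]
        calc min n (A.card + B.card - 1) ≤ n := min_le_left _ _
          _ ≤ A.card := this
          _ ≤ (A + B).card := Finset.card_le_card h1
      · push_neg at hB
        have hBeq : B = {0} := by
          apply Finset.eq_singleton_iff_unique_mem.mpr
          exact ⟨hB0, fun b hb => hB b hb⟩
        subst hBeq
        simp only [Finset.add_singleton, add_zero]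
        calc min n (A.card + Finset.card {(0:ZMod n)} - 1) ≤ A.card + 1 - 1 :=
              min_le_right _ _
          _ = A.card := by simp
          _ = (A.image (· + (0:ZMod n))).card := by
              rw [Finset.card_image_of_injective _ (add_left_injective 0)]
    · push_neg at hall
      obtain ⟨a₀, ha₀, b₀, hb₀, hab₀⟩ := hall
      set A' : Finset (ZMod n) := A ∪ B.image (a₀ + ·) with hA'
      set B' : Finset (ZMod n) := B.filter (fun b => a₀ + b ∈ A) with hB'
      have hBsub : B' ⊆ B := Finset.filter_subset _ _
      have hB'card : B'.card < B.card := by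
        apply Finset.card_lt_card
        refine ⟨hBsub, fun h => ?_⟩
        have := h hb₀
        simp [hB'] at this
        exact hab₀ this.2
      have hinter : A ∩ B.image (a₀ + ·) = B'.image (a₀ + ·) := by
        ext x
        simp only [Finset.mem_inter, Finset.mem_image, hB', Finset.mem_filter]
        constructor
        · rintro ⟨hxA, b, hb, rfl⟩; exact ⟨b, ⟨hb, hxA⟩, rfl⟩
        · rintro ⟨b, ⟨hb, hba⟩, rfl⟩; exact ⟨hba, b, hb, rfl⟩
      have hcards : A'.card + B'.card = A.card + B.card := by
        have h1 : A'.card = A.card + (B.image (a₀ + ·)).card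
            - (A ∩ B.image (a₀ + ·)).card := by
          rw [hA', Finset.card_union]
        have hinj : Function.Injective (a₀ + ·) := add_right_injective a₀
        rw [h1, hinter, Finset.card_image_of_injective _ hinj,
          Finset.card_image_of_injective _ hinj]
        have h2 : B'.card ≤ B.card := Finset.card_le_card hBsub
        omega
      have hsub : A' + B' ⊆ A + B := by
        intro x hx
        rw [Finset.mem_add] at hx
        obtain ⟨y, hy, b, hb, rfl⟩ := hx
        rw [hA', Finset.mem_union] at hy
        rcases hy with hy | hy
        · exact Finset.add_mem_add hy (hBsub hb)
        · rw [Finset.mem_image] at hy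
          obtain ⟨c, hc, rfl⟩ := hy
          have hb' : a₀ + b ∈ A := (Finset.mem_filter.mp hb).2
          have : a₀ + c + b = (a₀ + b) + c := by ring
          rw [this]
          exact Finset.add_mem_add hb' hc
      have hA'ne : A'.Nonempty := hA.mono (Finset.subset_union_left)
      have h0' : (0 : ZMod n) ∈ B' := by
        rw [hB', Finset.mem_filter]
        exact ⟨hB0, by simpa using ha₀⟩
      have hu' : ∀ b ∈ B', b ≠ 0 → IsUnit b := fun b hb => hBu b (hBsub hb)
      have := ih A' B' (by omega) hA'ne h0' hu'
      calc min n (A.card + B.card - 1) = min n (A'.card + B'.card - 1) := by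
            rw [hcards]
        _ ≤ (A' + B').card := this
        _ ≤ (A + B).card := Finset.card_le_card hsub

/-- Selection of injective representatives from a family of growing-cardinality sets. -/
lemma select {β : Type*} [DecidableEq β] [Nonempty β] (W : ℕ → Finset β) :
    ∀ T : ℕ, (∀ s, 1 ≤ s → s ≤ T → s ≤ (W s).card) →
    ∃ f : ℕ → β, Set.InjOn f ↑(Finset.Icc 1 T) ∧ ∀ s ∈ Finset.Icc 1 T, f s ∈ W s := by
  intro T
  induction T with
  | zero =>
    intro _
    exact ⟨fun _ => Classical.arbitrary β, by simp, by simp⟩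
  | succ T ih =>
    intro h
    obtain ⟨f, hinj, hmem⟩ := ih (fun s h1 h2 => h s h1 (h2.trans (Nat.le_succ T)))
    have hcard : ((Finset.Icc 1 T).image f).card ≤ T := by
      calc ((Finset.Icc 1 T).image f).card ≤ (Finset.Icc 1 T).card :=
            Finset.card_image_le
        _ = T := by simp
    have hne : (W (T+1) \ (Finset.Icc 1 T).image f).Nonempty := by
      rw [← Finset.card_pos]
      have h1 := h (T+1) (by omega) le_rfl
      have h2 := Finset.card_sdiff_add_card (W (T+1)) ((Finset.Icc 1 T).image f)
      have h3 : (W (T+1)).card ≤ (W (T+1) ∪ (Finset.Icc 1 T).image f).card :=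
        Finset.card_le_card Finset.subset_union_left
      omega
    obtain ⟨y, hy⟩ := hne
    rw [Finset.mem_sdiff] at hy
    refine ⟨Function.update f (T+1) y, ?_, ?_⟩
    · intro a ha b hb hab
      simp only [Finset.coe_Icc, Set.mem_Icc] at ha hb
      by_cases haT : a = T + 1 <;> by_cases hbT : b = T + 1
      · rw [haT, hbT]
      · exfalso
        rw [haT, Function.update_self, Function.update_of_ne hbT] at hab
        exact hy.2 (Finset.mem_image.mpr ⟨b, Finset.mem_Icc.mpr ⟨hb.1, by omega⟩, hab.symm⟩)
      · exfalso
        rw [hbT, Function.update_self, Function.update_of_ne haT] at hab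
        exact hy.2 (Finset.mem_image.mpr ⟨a, Finset.mem_Icc.mpr ⟨ha.1, by omega⟩, hab⟩)
      · rw [Function.update_of_ne haT, Function.update_of_ne hbT] at hab
        exact hinj (by simp only [Finset.coe_Icc, Set.mem_Icc]; omega)
          (by simp only [Finset.coe_Icc, Set.mem_Icc]; omega) hab
    · intro s hs
      rw [Finset.mem_Icc] at hs
      by_cases hsT : s = T + 1
      · rw [hsT, Function.update_self]; exact hy.1
      · rw [Function.update_of_ne hsT]
        exact hmem s (Finset.mem_Icc.mpr ⟨hs.1, by omega⟩)

theorem stmt_8 (p : ℕ) (hp : p.Prime) (α : ℕ) (hα : 0 < α) (k : ℕ) (hk : k = p ^ α)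
    (A : Finset ℤ) (hA : A.Nonempty)
    (j : ℕ) (hj : 0 < j) (u : ℕ → ℕ)
    (hu_lt : ∀ i ∈ Finset.Icc 1 j, u i < k)
    (hu_inj : ∀ i ∈ Finset.Icc 1 j, ∀ i' ∈ Finset.Icc 1 j, u i = u i' → i = i')
    (hu_attained : ∀ i ∈ Finset.Icc 1 j, (resClass k A (u i)).Nonempty)
    (hu_cover : ∀ a ∈ A, ∃ i ∈ Finset.Icc 1 j, a % (k : ℤ) = (u i : ℤ))
    (hu1 : u 1 = 0)
    (hmono : ∀ i ∈ Finset.Icc 1 j, ∀ i' ∈ Finset.Icc 1 j, i ≤ i' →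
      (resClass k A (u i')).card ≤ (resClass k A (u i)).card)
    (m : ℕ) (hm_mem : m ∈ Finset.Icc 1 j) (hm_p : ¬ p ∣ u m)
    (hm_min : ∀ i ∈ Finset.Icc 1 j, ¬ p ∣ u i → m ≤ i)
    (hX : (Xhat k A (u m)).card + m - 1 ≤ k) :
    ∑ i ∈ Finset.Icc 1 (m - 1), (resClass k A (u i)).card ≤
      ((resClass k A (u m) + kdil k A) \
        (resClass k A (u m) + kdil k (resClass k A (u m)))).card := by
  classical
  subst hk
  set k := p ^ α with hk
  have hk2 : 2 ≤ k := by
    calc 2 ≤ p := hp.two_le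
      _ ≤ p ^ α := Nat.le_self_pow (by omega) p
  haveI : NeZero k := ⟨by omega⟩
  haveI : Fact (1 < k) := ⟨by omega⟩
  have hk0 : (k : ℤ) ≠ 0 := by exact_mod_cast (by omega : k ≠ 0)
  obtain ⟨hm1, hmj⟩ := Finset.mem_Icc.mp hm_mem
  set S : Finset (ZMod k) := Xhat k A ((u m : ℤ)) with hS
  have hS_ne : S.Nonempty := ((hu_attained m hm_mem).image _).image _
  set c : ℕ → ZMod k := fun i => (u i : ZMod k) - (u m : ZMod k) with hc
  have hIccsub : ∀ t, t ≤ m - 1 → Finset.Icc 1 t ⊆ Finset.Icc 1 j := by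
    intro t ht i hi
    rw [Finset.mem_Icc] at *
    omega
  have hcast_inj : ∀ i ∈ Finset.Icc 1 j, ∀ i' ∈ Finset.Icc 1 j,
      (u i : ZMod k) = (u i' : ZMod k) → i = i' := by
    intro i hi i' hi' h
    apply hu_inj i hi i' hi'
    have := congrArg ZMod.val h
    rwa [ZMod.val_cast_of_lt (hu_lt i hi), ZMod.val_cast_of_lt (hu_lt i' hi')] at this
  have hc_unit : ∀ i ∈ Finset.Icc 1 (m-1), IsUnit (c i) := by
    intro i hi
    have hij := hIccsub (m-1) le_rfl hi
    have hpi : p ∣ u i := by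
      by_contra hndvd
      have := hm_min i hij hndvd
      rw [Finset.mem_Icc] at hi
      omega
    have hum : u m < k := hu_lt m hm_mem
    have he : c i = ((u i + k - u m : ℕ) : ZMod k) := by
      rw [hc]
      push_cast [Nat.cast_sub (by omega : u m ≤ u i + k)]
      rw [ZMod.natCast_self]
      ring
    have hnp : ¬ p ∣ (u i + k - u m) := by
      intro hdvd
      have hpk : p ∣ k := hk ▸ dvd_pow_self p (by omega)
      have h1 : p ∣ u i + k := Nat.dvd_add hpi hpk
      have h2 : p ∣ (u i + k) - (u i + k - u m) := Nat.dvd_sub h1 hdvd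
      have h3 : (u i + k) - (u i + k - u m) = u m := by omega
      rw [h3] at h2
      exact hm_p h2
    rw [he, ZMod.isUnit_iff_coprime, hk]
    exact Nat.Coprime.pow_right α ((Nat.Prime.coprime_iff_not_dvd hp).mpr hnp).symm

  have hc_inj : ∀ t, t ≤ m - 1 → Set.InjOn c ↑(Finset.Icc 1 t) := by
    intro t ht i hi i' hi' hcc
    simp only [Finset.coe_Icc, Set.mem_Icc] at hi hi'
    have hi1 : i ∈ Finset.Icc 1 j := by rw [Finset.mem_Icc]; omega
    have hi2 : i' ∈ Finset.Icc 1 j := by rw [Finset.mem_Icc]; omega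
    apply hcast_inj i hi1 i' hi2
    have : (u i : ZMod k) - (u m : ZMod k) = (u i' : ZMod k) - (u m : ZMod k) := hcc
    linear_combination this
  set W : ℕ → Finset (ZMod k) :=
    fun t => (S + insert 0 ((Finset.Icc 1 t).image c)) \ S with hW
  have hWcard : ∀ t, 1 ≤ t → t ≤ m - 1 → t ≤ (W t).card := by
    intro t h1 ht
    have hCt : ((Finset.Icc 1 t).image c).card = t := by
      rw [Finset.card_image_of_injOn (hc_inj t ht)]
      simp
    have h0 : (0 : ZMod k) ∉ (Finset.Icc 1 t).image c := by
      intro h0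
      obtain ⟨i, hi, hci⟩ := Finset.mem_image.mp h0
      have hisub : i ∈ Finset.Icc 1 (m-1) := by
        rw [Finset.mem_Icc] at hi ⊢; omega
      have := hc_unit i hisub
      rw [hci] at this
      exact not_isUnit_zero this
    set C0 := insert (0 : ZMod k) ((Finset.Icc 1 t).image c) with hC0
    have hC0card : C0.card = t + 1 := by
      rw [hC0, Finset.card_insert_of_notMem h0, hCt]
    have hunits : ∀ b ∈ C0, b ≠ 0 → IsUnit b := by
      intro b hb hb0
      rcases Finset.mem_insert.mp hb with rfl | hb'
      · exact absurd rfl hb0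
      · obtain ⟨i, hi, rfl⟩ := Finset.mem_image.mp hb'
        refine hc_unit i ?_
        rw [Finset.mem_Icc] at hi ⊢; omega
    have hch := chowla k C0.card S C0 le_rfl hS_ne (Finset.mem_insert_self _ _) hunits
    have hsub : S ⊆ S + C0 := by
      intro x hx
      have := Finset.add_mem_add hx
        (Finset.mem_insert_self (0:ZMod k) ((Finset.Icc 1 t).image c))
      simpa using this
    have hsd : (W t).card = (S + C0).card - S.card := by
      rw [hW]
      simp only
      rw [Finset.card_sdiff_of_subset hsub]
    have hle : S.card + t ≤ k := by
      have := hX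
      omega
    rw [hC0card] at hch
    have he2 : S.card + (t+1) - 1 = S.card + t := by omega
    rw [he2, min_eq_right hle] at hch
    have := Finset.card_le_card hsub
    omega
  obtain ⟨f, hf_inj, hf_mem⟩ := select W (m - 1) hWcard
  -- basic arithmetic helpers
  have res_dvd : ∀ (v : ℤ) (b : ℤ), b ∈ resClass k A v → (k:ℤ) ∣ b - v := by
    intro v b hb
    have hmod : b % (k:ℤ) = v := (Finset.mem_filter.mp hb).2
    have hbv : b - v = (k:ℤ) * (b / k) := by
      rw [← hmod, Int.emod_def]
      ring
    exact ⟨b / k, hbv⟩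
  have cast_res : ∀ (i : ℕ) (b : ℤ), b ∈ resClass k A ((u i : ℤ)) →
      ((b : ZMod k)) = ((u i : ℕ) : ZMod k) := by
    intro i b hb
    have h2 : (((b - (u i:ℤ)) : ℤ) : ZMod k) = 0 := by
      rw [ZMod.intCast_zmod_eq_zero_iff_dvd]
      exact res_dvd _ b hb
    push_cast at h2
    linear_combination h2
  have key_div : ∀ a : ℤ, a ∈ resClass k A ((u m : ℤ)) →
      (k:ℤ) * ((a - (u m:ℤ)) / k) = a - (u m:ℤ) :=
    fun a ha => Int.mul_ediv_cancel' (res_dvd _ a ha)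
  -- the "second digit" computation
  have hval0 : ∀ a' : ℤ, a' ∈ resClass k A ((u m : ℤ)) → ∀ (i : ℕ) (b : ℤ),
      b ∈ resClass k A ((u i : ℤ)) →
      (((a' + (k:ℤ)*b - (u m:ℤ)) / (k:ℤ) : ℤ) : ZMod k) =
        (((a' - (u m:ℤ)) / (k:ℤ) : ℤ) : ZMod k) + (u i : ZMod k) := by
    intro a' ha' i b hb
    have h1 : a' + (k:ℤ)*b - (u m:ℤ) = (a' - (u m:ℤ)) + (k:ℤ)*b := by ring
    rw [h1, Int.add_mul_ediv_left _ _ hk0]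
    push_cast
    rw [cast_res i b hb]
  -- choose witnesses
  have H : ∀ s : ℕ, ∃ (i : ℕ) (a : ℤ), s ∈ Finset.Icc 1 (m-1) →
      i ∈ Finset.Icc 1 s ∧ a ∈ resClass k A ((u m : ℤ)) ∧
      ((((a - ((u m:ℕ):ℤ)) / (k:ℤ)) : ℤ) : ZMod k) = f s - c i ∧ f s ∉ S := by
    intro s
    by_cases hs : s ∈ Finset.Icc 1 (m-1)
    · have hws := hf_mem s hs
      rw [hW] at hws
      simp only [Finset.mem_sdiff] at hws
      obtain ⟨hin, hout⟩ := hws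
      rw [Finset.mem_add] at hin
      obtain ⟨x, hx, y, hy, hxy⟩ := hin
      rcases Finset.mem_insert.mp hy with rfl | hy'
      · exfalso
        apply hout
        rw [← hxy, add_zero]
        exact hx
      · obtain ⟨i, hi, rfl⟩ := Finset.mem_image.mp hy'
        rw [hS] at hx
        simp only [Xhat, Xset, Finset.mem_image] at hx
        obtain ⟨ξ, ⟨a, ha, hdiv⟩, hcast⟩ := hx
        refine ⟨i, a, fun _ => ⟨hi, ha, ?_, hout⟩⟩
        rw [hdiv, hcast, ← hxy]
        ring
    · exact ⟨1, 0, fun h => absurd h hs⟩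
  choose g w hgw using H
  -- the digit value of elements of E s
  have hval : ∀ s ∈ Finset.Icc 1 (m-1), ∀ b ∈ resClass k A ((u (g s) : ℤ)),
      (((w s + (k:ℤ)*b - (u m:ℤ)) / (k:ℤ) : ℤ) : ZMod k) = f s + (u m : ZMod k) := by
    intro s hs b hb
    obtain ⟨hgs, hws, hcast, hout⟩ := hgw s hs
    rw [hval0 (w s) hws (g s) b hb, hcast, hc]
    ring
  set E : ℕ → Finset ℤ :=
    fun s => (resClass k A ((u (g s) : ℤ))).image (fun b => w s + (k:ℤ) * b) with hE
  have hEcard : ∀ s, (E s).card = (resClass k A ((u (g s) : ℤ))).card := by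
    intro s
    rw [hE]
    apply Finset.card_image_of_injective
    intro x y hxy
    simp only at hxy
    exact mul_left_cancel₀ hk0 (add_left_cancel hxy)
  have hdisj : ∀ s ∈ Finset.Icc 1 (m-1), ∀ s' ∈ Finset.Icc 1 (m-1),
      s ≠ s' → Disjoint (E s) (E s') := by
    intro s hs s' hs' hne
    rw [Finset.disjoint_left]
    intro z hz hz'
    simp only [hE, Finset.mem_image] at hz hz'
    obtain ⟨b, hb, rfl⟩ := hz
    obtain ⟨b', hb', heq⟩ := hz'
    have h1 := hval s hs b hb
    have h2 := hval s' hs' b' hb'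
    rw [heq, h1] at h2
    have : f s = f s' := by linear_combination h2
    exact hne (hf_inj (Finset.mem_coe.mpr hs) (Finset.mem_coe.mpr hs') this)
  have hsubΔ : ∀ s ∈ Finset.Icc 1 (m-1), E s ⊆
      ((resClass k A (u m) + kdil k A) \
        (resClass k A (u m) + kdil k (resClass k A (u m)))) := by
    intro s hs z hz
    obtain ⟨hgs, hws, hcastw, hout⟩ := hgw s hs
    simp only [hE, Finset.mem_image] at hz
    obtain ⟨b, hb, rfl⟩ := hz
    rw [Finset.mem_sdiff]
    constructor
    · rw [Finset.mem_add]
      refine ⟨w s, hws, (k:ℤ)*b, ?_, rfl⟩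
      rw [kdil, Finset.mem_image]
      exact ⟨b, (Finset.mem_filter.mp hb).1, rfl⟩
    · intro hmem
      rw [Finset.mem_add] at hmem
      obtain ⟨a', ha', y, hy, hxy⟩ := hmem
      rw [kdil, Finset.mem_image] at hy
      obtain ⟨b'', hb'', rfl⟩ := hy
      have h1 := hval s hs b hb
      have h2 := hval0 a' ha' m b'' hb''
      rw [hxy, h1] at h2
      have hfs : f s = (((a' - (u m:ℤ)) / (k:ℤ) : ℤ) : ZMod k) := by
        linear_combination h2
      apply hout
      rw [hS, hfs]
      simp only [Xhat, Xset, Finset.mem_image]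
      exact ⟨(a' - (u m:ℤ)) / (k:ℤ), ⟨a', ha', rfl⟩, rfl⟩
  calc ∑ i ∈ Finset.Icc 1 (m-1), (resClass k A (u i)).card
      ≤ ∑ s ∈ Finset.Icc 1 (m-1), (resClass k A ((u (g s) : ℤ))).card := by
        apply Finset.sum_le_sum
        intro s hs
        have hgs := (hgw s hs).1
        rw [Finset.mem_Icc] at hs hgs
        exact hmono (g s) (Finset.mem_Icc.mpr ⟨hgs.1, by omega⟩) s
          (Finset.mem_Icc.mpr ⟨hs.1, by omega⟩) hgs.2
    _ = ∑ s ∈ Finset.Icc 1 (m-1), (E s).card := by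
        exact Finset.sum_congr rfl fun s _ => (hEcard s).symm
    _ = ((Finset.Icc 1 (m-1)).biUnion E).card := (Finset.card_biUnion hdisj).symm
    _ ≤ _ := by
        apply Finset.card_le_card
        intro z hz
        rw [Finset.mem_biUnion] at hz
        obtain ⟨s, hs, hz⟩ := hz
        exact hsubΔ s hs hz
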